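/- arXiv:2006.10032 — 5 statements merged into one kernel-verified Lean document; each statement's English description precedes it below -/
import Mathlib

section
/- For any a < 0, one has 1 + erf(a) > (2/√π)·exp(−a²)/(−a + √(a² + 2)), and consequently 1 + erf(a) ≥ exp(−a²)/(√π·(√2 − 2a)). -/
open MeasureTheory Real Set

/-- The error function `erf t = (2/√π) ∫_0^t exp(−s²) ds`. -/
noncomputable def erf (t : ℝ) : ℝ :=
  (2 / Real.sqrt π) * ∫ s in (0:ℝ)..t, Real.exp (-s ^ 2)

lemma gauss_tail_lb (b : ℝ) :
    Real.exp (-b ^ 2) / (b + Real.sqrt (b ^ 2 + 2)) <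
      ∫ s in Ioi b, Real.exp (-s ^ 2) := by
  set E : ℝ → ℝ := fun s => Real.exp (-s ^ 2) with hE
  have hEcont : Continuous E := by continuity
  have hEint : Integrable E := by
    have := integrable_exp_neg_mul_sq (one_pos)
    simpa [hE, one_mul] using this
  set sq : ℝ → ℝ := fun x => Real.sqrt (x ^ 2 + 2) with hsq
  have hsqpos : ∀ x, 0 < sq x := fun x => Real.sqrt_pos.2 (by positivity)
  have hsq_sq : ∀ x, sq x ^ 2 = x ^ 2 + 2 := fun x =>
    Real.sq_sqrt (by positivity)
  have hxlt : ∀ x : ℝ, x < sq x := by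
    intro x
    have h1 : Real.sqrt (x ^ 2) < sq x :=
      Real.sqrt_lt_sqrt (by positivity) (by linarith)
    have h2 : x ≤ Real.sqrt (x ^ 2) := by
      rw [Real.sqrt_sq_eq_abs]; exact le_abs_self x
    linarith
  have hneg_lt : ∀ x : ℝ, -x < sq x := by
    intro x
    have h1 : Real.sqrt (x ^ 2) < sq x :=
      Real.sqrt_lt_sqrt (by positivity) (by linarith)
    have h2 : -x ≤ Real.sqrt (x ^ 2) := by
      rw [Real.sqrt_sq_eq_abs]; exact neg_le_abs x
    linarith
  set v : ℝ → ℝ := fun x => x + sq x with hv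
  have hvpos : ∀ x, 0 < v x := fun x => by have := hneg_lt x; simp [hv]; linarith
  set f : ℝ → ℝ := fun x => E x / v x with hf
  set F : ℝ → ℝ := fun x => (∫ s in b..x, E s) + f x with hF
  -- derivative facts
  have hsqder : ∀ x, HasDerivAt sq (x / sq x) x := by
    intro x
    have hinner : HasDerivAt (fun x : ℝ => x ^ 2 + 2) (2 * x) x := by
      simpa using ((hasDerivAt_pow 2 x).add_const 2)
    have h := (Real.hasDerivAt_sqrt (by positivity : (x:ℝ) ^ 2 + 2 ≠ 0)).comp x hinner
    refine h.congr_deriv ?_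
    field_simp [hsq]
    show x = x * sq x / sq x
    rw [mul_div_assoc, div_self (hsqpos x).ne', mul_one]
  have hEder : ∀ x, HasDerivAt E (-2 * x * E x) x := by
    intro x
    have hinner : HasDerivAt (fun x : ℝ => -x ^ 2) (-(2 * x)) x := by
      simpa using (hasDerivAt_pow 2 x).fun_neg
    have h := (Real.hasDerivAt_exp (-x ^ 2)).comp x hinner
    refine h.congr_deriv ?_
    simp [hE]; ring
  have hvder : ∀ x, HasDerivAt v (1 + x / sq x) x := fun x =>
    (hasDerivAt_id x).add (hsqder x)
  have hfder : ∀ x, HasDerivAt f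
      ((-2 * x * E x * v x - E x * (1 + x / sq x)) / (v x) ^ 2) x := fun x =>
    (hEder x).div (hvder x) (hvpos x).ne'
  have hFder : ∀ x, HasDerivAt F
      (E x + (-2 * x * E x * v x - E x * (1 + x / sq x)) / (v x) ^ 2) x := by
    intro x
    refine HasDerivAt.add ?_ (hfder x)
    exact intervalIntegral.integral_hasDerivAt_right
      (hEcont.intervalIntegrable _ _)
      (hEcont.stronglyMeasurable.stronglyMeasurableAtFilter)
      hEcont.continuousAt
  have hderpos : ∀ x, 0 <
      E x + (-2 * x * E x * v x - E x * (1 + x / sq x)) / (v x) ^ 2 := by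
    intro x
    have hEpos : 0 < E x := Real.exp_pos _
    have hv0 : v x ≠ 0 := (hvpos x).ne'
    have hs0 : sq x ≠ 0 := (hsqpos x).ne'
    have hxs : x / sq x < 1 := (div_lt_one (hsqpos x)).2 (hxlt x)
    have hgoal : 0 < E x * v x ^ 2 + (-2 * x * E x * v x - E x * (1 + x / sq x)) := by
      have hvx : v x = x + sq x := rfl
      rw [hvx]
      nlinarith [hsq_sq x, hxs, hEpos]
    have h3 : E x + (-2 * x * E x * v x - E x * (1 + x / sq x)) / v x ^ 2
        = (E x * v x ^ 2 + (-2 * x * E x * v x - E x * (1 + x / sq x))) / v x ^ 2 := by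
      field_simp
    rw [h3]
    exact div_pos hgoal (by positivity)
  have hmono : StrictMono F := strictMono_of_hasDerivAt_pos hFder hderpos
  -- limit of F at infinity
  have hlim1 : Filter.Tendsto (fun x => ∫ s in b..x, E s) Filter.atTop
      (nhds (∫ s in Ioi b, E s)) :=
    intervalIntegral_tendsto_integral_Ioi b hEint.integrableOn Filter.tendsto_id
  have hlimE : Filter.Tendsto E Filter.atTop (nhds 0) := by
    apply Real.tendsto_exp_atBot.comp
    have h1 : Filter.Tendsto (fun x : ℝ => x ^ 2) Filter.atTop Filter.atTop :=
      Filter.tendsto_pow_atTop two_ne_zero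
    simpa [hE, Function.comp] using (Filter.tendsto_neg_atBot_iff.2 h1)
  have hlimv : Filter.Tendsto v Filter.atTop Filter.atTop := by
    apply Filter.tendsto_atTop_mono (fun x => ?_) Filter.tendsto_id
    have := (hsqpos x).le
    simp [hv]; linarith
  have hlimf : Filter.Tendsto f Filter.atTop (nhds 0) := by
    have := hlimE.mul hlimv.inv_tendsto_atTop
    simpa [hf, div_eq_mul_inv] using this
  have hlimF : Filter.Tendsto F Filter.atTop (nhds (∫ s in Ioi b, E s)) := by
    have := hlim1.add hlimf
    simpa [hF] using this
  -- F b < F (b+1) ≤ limit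
  have h1 : F b < F (b + 1) := hmono (by linarith)
  have h2 : F (b + 1) ≤ ∫ s in Ioi b, E s := by
    refine ge_of_tendsto hlimF ?_
    filter_upwards [Filter.eventually_ge_atTop (b + 1)] with x hx
    exact hmono.le_iff_le.2 hx
  have hFb : F b = E b / v b := by simp [hF, hf]
  calc Real.exp (-b ^ 2) / (b + Real.sqrt (b ^ 2 + 2)) = F b := by
        rw [hFb]
      _ < F (b + 1) := h1
      _ ≤ _ := h2

/-- For `a < 0`: `1 + erf a > (2/√π)·exp(−a²)/(−a+√(a²+2))`, and consequently
`1 + erf a ≥ exp(−a²)/(√π (√2 − 2a))`. -/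
theorem one_add_erf_lower_bound (a : ℝ) (ha : a < 0) :
    (2 / Real.sqrt π) * Real.exp (-a ^ 2) / (-a + Real.sqrt (a ^ 2 + 2)) < 1 + erf a ∧
    Real.exp (-a ^ 2) / (Real.sqrt π * (Real.sqrt 2 - 2 * a)) ≤ 1 + erf a := by
  have hπ : 0 < Real.sqrt π := Real.sqrt_pos.2 Real.pi_pos
  set E : ℝ → ℝ := fun s => Real.exp (-s ^ 2) with hE
  have hEint : Integrable E := by
    have := integrable_exp_neg_mul_sq (one_pos)
    simpa [hE, one_mul] using this
  set b : ℝ := -a with hbdef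
  have hb : 0 < b := by simp [hbdef]; linarith
  -- 1 + erf a = (2/√π) ∫_{Ioi b} E
  have hgauss : ∫ s in Ioi (0:ℝ), E s = Real.sqrt π / 2 := by
    have := integral_gaussian_Ioi 1
    simpa [hE, one_mul] using this
  have hsplit : ∫ s in Ioi (0:ℝ), E s = (∫ s in (0:ℝ)..b, E s) + ∫ s in Ioi b, E s := by
    rw [intervalIntegral.integral_of_le hb.le,
      ← setIntegral_union Ioc_disjoint_Ioi_same measurableSet_Ioi
        hEint.integrableOn hEint.integrableOn,
      Ioc_union_Ioi_eq_Ioi hb.le]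
  have hrefl : (∫ s in (0:ℝ)..a, E s) = -(∫ s in (0:ℝ)..b, E s) := by
    have h : (∫ x in (0:ℝ)..b, E (-x)) = ∫ x in (-b)..(0:ℝ), E x := by
      simpa using intervalIntegral.integral_comp_neg (a := (0:ℝ)) (b := b) (f := E)
    have h2 : (∫ x in (0:ℝ)..b, E (-x)) = ∫ x in (0:ℝ)..b, E x := by
      congr 1
      ext x
      simp [hE]
    rw [h2] at h
    rw [h, hbdef, neg_neg, intervalIntegral.integral_symm]
  have hkey : 1 + erf a = (2 / Real.sqrt π) * ∫ s in Ioi b, E s := by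
    have h1 : (1:ℝ) = (2 / Real.sqrt π) * ∫ s in Ioi (0:ℝ), E s := by
      rw [hgauss]; field_simp
    rw [h1, erf, hrefl, hsplit]
    ring
  have hmain := gauss_tail_lb b
  have hvpos : 0 < -a + Real.sqrt (a ^ 2 + 2) := by
    have : Real.sqrt (a ^ 2) < Real.sqrt (a ^ 2 + 2) :=
      Real.sqrt_lt_sqrt (by positivity) (by linarith)
    rw [Real.sqrt_sq_eq_abs] at this
    have := neg_le_abs a
    nlinarith [Real.sqrt_nonneg (a ^ 2 + 2), abs_nonneg a]
  have hfirst : (2 / Real.sqrt π) * Real.exp (-a ^ 2) / (-a + Real.sqrt (a ^ 2 + 2))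
      < 1 + erf a := by
    rw [hkey]
    have hEq : Real.exp (-b ^ 2) / (b + Real.sqrt (b ^ 2 + 2))
        = Real.exp (-a ^ 2) / (-a + Real.sqrt (a ^ 2 + 2)) := by
      rw [hbdef]; ring_nf
    rw [hEq] at hmain
    calc (2 / Real.sqrt π) * Real.exp (-a ^ 2) / (-a + Real.sqrt (a ^ 2 + 2))
        = (2 / Real.sqrt π) * (Real.exp (-a ^ 2) / (-a + Real.sqrt (a ^ 2 + 2))) := by
          ring
      _ < (2 / Real.sqrt π) * ∫ s in Ioi b, E s := by
          apply mul_lt_mul_of_pos_left hmain (by positivity)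
  refine ⟨hfirst, le_trans ?_ hfirst.le⟩
  -- second inequality: compare the two lower bounds
  have h2pos : 0 < Real.sqrt π * (Real.sqrt 2 - 2 * a) := by
    have h2 : 0 < Real.sqrt 2 := Real.sqrt_pos.2 two_pos
    have : 0 < Real.sqrt 2 - 2 * a := by linarith
    positivity
  have hsq2 : Real.sqrt (a ^ 2 + 2) ≤ 2 * Real.sqrt 2 - 3 * a := by
    have h2 : Real.sqrt 2 ^ 2 = 2 := Real.sq_sqrt (by norm_num)
    have h1 : Real.sqrt (a ^ 2 + 2) ≤ Real.sqrt ((2 * Real.sqrt 2 - 3 * a) ^ 2) := by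
      apply Real.sqrt_le_sqrt
      nlinarith [Real.sqrt_nonneg 2, ha]
    rwa [Real.sqrt_sq (by nlinarith [Real.sqrt_nonneg 2])] at h1
  have hEpos : 0 < Real.exp (-a ^ 2) := Real.exp_pos _
  rw [div_le_div_iff₀ h2pos hvpos]
  have hc : 2 / Real.sqrt π * Real.exp (-a ^ 2) * (Real.sqrt π * (Real.sqrt 2 - 2 * a))
      = 2 * Real.exp (-a ^ 2) * (Real.sqrt 2 - 2 * a) := by
    field_simp
  rw [hc]
  nlinarith [hsq2, hEpos]
end

section
/- Let ℓ(t) = exp(−|t|) and define g_σ(μ) = E_{z ∼ N(μ, σ²)}[ℓ(z)]. Then for 0 < σ ≤ 1 and all μ ∈ ℝ, g_σ(μ) ≥ 0.25·ℓ(μ). -/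
open MeasureTheory ProbabilityTheory Real
open scoped ENNReal NNReal

/-- `g σ μ = E_{z ∼ N(μ, σ²)}[exp(−|z|)]`. -/
noncomputable def gConv (σ μ : ℝ) : ℝ :=
  ∫ z, Real.exp (-|z|) ∂(gaussianReal μ (σ ^ 2).toNNReal)

lemma exp_neg_ge_aux (x : ℝ) (hx0 : 0 ≤ x) (hx1 : x ≤ 6) :
    (1 - x / 6) ^ 6 ≤ Real.exp (-x) := by
  have h1 : -(x/6) + 1 ≤ Real.exp (-(x/6)) := Real.add_one_le_exp _
  have h2 : (0:ℝ) ≤ 1 - x/6 := by linarith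
  calc (1 - x / 6) ^ 6 ≤ (Real.exp (-(x/6))) ^ 6 := by
        apply pow_le_pow_left₀ h2
        linarith
    _ = Real.exp (-x) := by
        rw [← Real.exp_nat_mul]
        norm_num
        ring

lemma sqrt_two_pi_le : Real.sqrt (2 * π) ≤ 2.51 := by
  rw [show (2.51:ℝ) = Real.sqrt (2.51^2) from (Real.sqrt_sq (by norm_num)).symm]
  exact Real.sqrt_le_sqrt (by nlinarith [Real.pi_lt_d2])

lemma key_numeric : Real.sqrt (2 * π) * 0.25 ≤ Real.exp (-(5/8)) + Real.exp (-(3/2)) := by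
  have h1 : ((43:ℝ)/48) ^ 6 ≤ Real.exp (-(5/8)) := by
    have h := exp_neg_ge_aux (5/8) (by norm_num) (by norm_num)
    have e : (1 - (5/8:ℝ)/6) = 43/48 := by norm_num
    rwa [e] at h
  have h2 : ((3:ℝ)/4) ^ 6 ≤ Real.exp (-(3/2)) := by
    have h := exp_neg_ge_aux (3/2) (by norm_num) (by norm_num)
    have e : (1 - (3/2:ℝ)/6) = 3/4 := by norm_num
    rwa [e] at h
  have h3 := sqrt_two_pi_le
  nlinarith

/-- For `0 < σ ≤ 1`, the Gaussian smoothing of `ℓ(t) = exp(−|t|)` satisfies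
`g_σ(μ) ≥ 0.25 ℓ(μ)`. -/
theorem gaussian_smoothed_loss_lower_bound (σ μ : ℝ) (hσ0 : 0 < σ) (hσ1 : σ ≤ 1) :
    0.25 * Real.exp (-|μ|) ≤ gConv σ μ := by
  set v : ℝ≥0 := (σ ^ 2).toNNReal with hv_def
  have hvR : (v : ℝ) = σ ^ 2 := Real.coe_toNNReal _ (sq_nonneg σ)
  have hv : v ≠ 0 := by
    intro h
    rw [h] at hvR
    simp at hvR
    nlinarith
  set p : ℝ → ℝ := gaussianPDFReal μ v with hp_def
  set h : ℝ → ℝ := fun x => p x * Real.exp (-|x|) with hh_def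
  -- Step 1 : gConv as Lebesgue integral
  have step1 : gConv σ μ = ∫ x, h x := by
    rw [gConv, gaussianReal_of_var_ne_zero _ hv]
    have hdens : gaussianPDF μ v = fun x => ((p x).toNNReal : ℝ≥0∞) := rfl
    rw [hdens, integral_withDensity_eq_integral_smul
        ((measurable_gaussianPDFReal μ v).real_toNNReal)]
    congr 1
    ext x
    rw [NNReal.smul_def, Real.coe_toNNReal _ (gaussianPDFReal_nonneg μ v x), smul_eq_mul]
  -- integrability and nonnegativity
  have hcont : Continuous fun x : ℝ => Real.exp (-|x|) :=
    (continuous_abs.neg).rexp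
  have hint : Integrable h := by
    have := (integrable_gaussianPDFReal μ v).bdd_mul (c := 1) hcont.aestronglyMeasurable
      (Filter.Eventually.of_forall fun x => by
        rw [Real.norm_eq_abs, abs_of_pos (Real.exp_pos _)]
        exact Real.exp_le_one_iff.mpr (neg_nonpos.mpr (abs_nonneg x)))
    have e : (fun x => Real.exp (-|x|) * p x) = h := funext fun x => mul_comm _ _
    rwa [e] at this
  have hnonneg : ∀ x, 0 ≤ h x := fun x =>
    mul_nonneg (gaussianPDFReal_nonneg μ v x) (Real.exp_pos _).le
  -- sets
  set s₁ : Set ℝ := Set.Icc (μ - σ*(1/2)) (μ + σ*(1/2)) with hs₁_def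
  set big : Set ℝ := Set.Icc (μ - σ*1) (μ + σ*1) with hbig_def
  set s₂ : Set ℝ := big \ s₁ with hs₂_def
  have hsub : s₁ ⊆ big := Set.Icc_subset_Icc (by linarith) (by linarith)
  have hms₁ : MeasurableSet s₁ := measurableSet_Icc
  have hmbig : MeasurableSet big := measurableSet_Icc
  have hms₂ : MeasurableSet s₂ := hmbig.diff hms₁
  have hvols₁ : volume s₁ = ENNReal.ofReal σ := by
    rw [hs₁_def, Real.volume_Icc]; ring_nf
  have hvolbig : volume big = ENNReal.ofReal (2*σ) := by
    rw [hbig_def, Real.volume_Icc]; ring_nf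
  have hvols₂ : volume s₂ = ENNReal.ofReal σ := by
    rw [hs₂_def, measure_diff hsub hms₁.nullMeasurableSet (by simp [hvols₁]),
      hvols₁, hvolbig, ← ENNReal.ofReal_sub _ hσ0.le]
    ring_nf
  -- pointwise bounds
  have hsqrt2pi_pos : 0 < Real.sqrt (2 * π) := Real.sqrt_pos.mpr (by positivity)
  have hsqrtv : Real.sqrt (2 * π * v) = σ * Real.sqrt (2 * π) := by
    rw [hvR, mul_comm (2*π) (σ^2), Real.sqrt_mul (sq_nonneg σ), Real.sqrt_sq hσ0.le]
  set C : ℝ := (σ * Real.sqrt (2 * π))⁻¹ * Real.exp (-|μ|) with hC_def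
  have hbound : ∀ t : ℝ, 0 ≤ t → t ≤ 1 → ∀ x ∈ Set.Icc (μ - σ*t) (μ + σ*t),
      C * Real.exp (-(t^2/2)) * Real.exp (-t) ≤ h x := by
    intro t ht0 ht1 x hx
    obtain ⟨hx1, hx2⟩ := hx
    have habs : |x - μ| ≤ σ * t := abs_le.mpr ⟨by linarith, by linarith⟩
    have hp_lb : (σ * Real.sqrt (2 * π))⁻¹ * Real.exp (-(t^2/2)) ≤ p x := by
      rw [hp_def, gaussianPDFReal, hsqrtv]
      have harg : -(t^2/2) ≤ -(x - μ)^2 / (2 * v) := by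
        have h2 : (x - μ)^2 ≤ (σ*t)^2 := by
          nlinarith [abs_nonneg (x - μ), sq_abs (x - μ)]
        have hσ2 : (0:ℝ) < 2 * σ^2 := by positivity
        rw [hvR, neg_div, neg_le_neg_iff, div_le_iff₀ hσ2]
        nlinarith
      exact mul_le_mul_of_nonneg_left (Real.exp_le_exp.mpr harg) (by positivity)
    have he_lb : Real.exp (-|μ|) * Real.exp (-t) ≤ Real.exp (-|x|) := by
      rw [← Real.exp_add]
      apply Real.exp_le_exp.mpr
      have hxa : |x| ≤ |μ| + σ * t := by
        calc |x| = |μ + (x - μ)| := by ring_nf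
          _ ≤ |μ| + |x - μ| := abs_add_le _ _
          _ ≤ |μ| + σ * t := by linarith
      have hst : σ * t ≤ t := by nlinarith
      linarith
    calc C * Real.exp (-(t^2/2)) * Real.exp (-t)
        = ((σ * Real.sqrt (2 * π))⁻¹ * Real.exp (-(t^2/2)))
            * (Real.exp (-|μ|) * Real.exp (-t)) := by rw [hC_def]; ring
      _ ≤ p x * Real.exp (-|x|) :=
          mul_le_mul hp_lb he_lb (by positivity)
            (le_trans (by positivity) hp_lb)
      _ = h x := rfl
  -- set integral bounds
  have int₁ : C * Real.exp (-((1/2)^2/2)) * Real.exp (-(1/2)) * (volume s₁).toReal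
      ≤ ∫ x in s₁, h x :=
    setIntegral_ge_of_const_le_real hms₁ (by simp [hvols₁])
      (hbound (1/2) (by norm_num) (by norm_num)) hint.integrableOn
  have int₂ : C * Real.exp (-(1^2/2)) * Real.exp (-1) * (volume s₂).toReal
      ≤ ∫ x in s₂, h x :=
    setIntegral_ge_of_const_le_real hms₂ (by simp [hvols₂])
      (fun x hx => hbound 1 (by norm_num) (by norm_num) x hx.1) hint.integrableOn
  rw [hvols₁, ENNReal.toReal_ofReal hσ0.le] at int₁
  rw [hvols₂, ENNReal.toReal_ofReal hσ0.le] at int₂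
  have split : (∫ x in s₁, h x) + ∫ x in s₂, h x = ∫ x in s₁ ∪ s₂, h x := by
    exact (setIntegral_union disjoint_sdiff_self_right hms₂
      hint.integrableOn hint.integrableOn).symm
  have hle : ∫ x in s₁ ∪ s₂, h x ≤ ∫ x, h x :=
    setIntegral_le_integral hint (Filter.Eventually.of_forall hnonneg)
  -- arithmetic assembly
  have hCσ : ∀ a b : ℝ, C * Real.exp a * Real.exp b * σ
      = Real.exp (-|μ|) / Real.sqrt (2*π) * Real.exp (a + b) := by
    intro a b
    rw [Real.exp_add, hC_def]
    field_simp
  have hsum : C * Real.exp (-((1/2)^2/2)) * Real.exp (-(1/2)) * σ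
      + C * Real.exp (-(1^2/2)) * Real.exp (-1) * σ
      = Real.exp (-|μ|) / Real.sqrt (2*π)
        * (Real.exp (-(5/8)) + Real.exp (-(3/2))) := by
    rw [hCσ, hCσ]
    norm_num
    ring
  have final : 0.25 * Real.exp (-|μ|)
      ≤ Real.exp (-|μ|) / Real.sqrt (2*π)
        * (Real.exp (-(5/8)) + Real.exp (-(3/2))) := by
    rw [div_mul_eq_mul_div, le_div_iff₀ hsqrt2pi_pos]
    nlinarith [key_numeric, Real.exp_pos (-|μ|)]
  rw [step1]
  calc 0.25 * Real.exp (-|μ|)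
      ≤ C * Real.exp (-((1/2)^2/2)) * Real.exp (-(1/2)) * σ
        + C * Real.exp (-(1^2/2)) * Real.exp (-1) * σ := by rw [hsum]; exact final
    _ ≤ (∫ x in s₁, h x) + ∫ x in s₂, h x := add_le_add int₁ int₂
    _ = ∫ x in s₁ ∪ s₂, h x := split
    _ ≤ ∫ x, h x := hle
end

section
/- Let ℓ(t) = exp(−|t|), g_σ(μ) = E_{z ∼ N(μ, σ²)}[ℓ(z)], and q_σ(μ) = ∂g_σ(μ)/∂σ. Then for all σ > 0 and all μ ∈ ℝ, q_σ(μ) ≥ −√(2/π)·exp(−μ²/(2σ²)). -/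
open MeasureTheory ProbabilityTheory Real Set Filter
open scoped ENNReal NNReal

lemma exp_neg_lip {a b : ℝ} (ha : 0 ≤ a) (hb : 0 ≤ b) :
    |Real.exp (-a) - Real.exp (-b)| ≤ |a - b| := by
  wlog h : a ≤ b generalizing a b
  · rw [abs_sub_comm, abs_sub_comm a b]; exact this hb ha (le_of_not_ge h)
  have h1 : Real.exp (-b) = Real.exp (-a) * Real.exp (a - b) := by
    rw [← Real.exp_add]; ring_nf
  have h2 : a - b + 1 ≤ Real.exp (a - b) := Real.add_one_le_exp _
  have h3 : Real.exp (-a) ≤ 1 := Real.exp_le_one_iff.2 (neg_nonpos.2 ha)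
  have h4 : (0:ℝ) < Real.exp (-a) := Real.exp_pos _
  have h5 : Real.exp (-b) ≤ Real.exp (-a) := Real.exp_le_exp.2 (by linarith)
  rw [abs_of_nonneg (by linarith), abs_of_nonpos (by linarith)]
  nlinarith

lemma gConv_eq (s μ : ℝ) :
    gConv s μ = ∫ u, Real.exp (-|s * u + μ|) ∂(gaussianReal 0 1) := by
  have h1 : (fun u : ℝ => s * u + μ) = (fun z => z + μ) ∘ (fun u => s * u) := rfl
  have hmap : (gaussianReal 0 1).map (fun u => s * u + μ)
      = gaussianReal μ (s ^ 2).toNNReal := by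
    rw [h1, ← Measure.map_map (measurable_add_const μ) (measurable_const_mul s)]
    rw [gaussianReal_map_const_mul, gaussianReal_map_add_const]
    norm_num
    congr 1
    ext
    simp [Real.coe_toNNReal _ (sq_nonneg s)]
  rw [gConv, ← hmap, integral_map]
  · exact ((measurable_const_mul s).add_const μ).aemeasurable
  · exact Continuous.aestronglyMeasurable (by fun_prop)

set_option maxHeartbeats 1000000 in
/-- The derivative `q_σ(μ) = ∂g_σ(μ)/∂σ` satisfies
`q_σ(μ) ≥ −√(2/π)·exp(−μ²/(2σ²))` for all `σ > 0` and `μ`. -/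
theorem deriv_gaussian_smoothed_loss_lower_bound (σ μ q : ℝ) (hσ : 0 < σ)
    (hq : HasDerivAt (fun s => gConv s μ) q σ) :
    -Real.sqrt (2 / π) * Real.exp (-μ ^ 2 / (2 * σ ^ 2)) ≤ q := by
  classical
  set γ : Measure ℝ := gaussianReal 0 1 with hγdef
  set p : ℝ → ℝ := gaussianPDFReal 0 1 with hpdef
  set c : ℝ := (Real.sqrt (2 * π))⁻¹ with hcdef
  have hc_pos : 0 < c := by
    rw [hcdef]
    have : (0:ℝ) < Real.sqrt (2 * π) := Real.sqrt_pos.2 (by positivity)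
    positivity
  have hp : ∀ u, p u = c * Real.exp (-(1/2) * u ^ 2) := by
    intro u
    rw [hpdef, gaussianPDFReal]
    congr 1
    · rw [hcdef]
      norm_num
    · congr 1
      push_cast
      ring
  have hp_nonneg : ∀ u, 0 ≤ p u := fun u => gaussianPDFReal_nonneg 0 1 u
  have hp_meas : Measurable p := measurable_gaussianPDFReal 0 1
  set d : ℝ → ℝ := fun u => if σ * u + μ < 0 then u * Real.exp (σ * u + μ)
      else (-u) * Real.exp (-(σ * u + μ)) with hddef
  have hd_meas : Measurable d := by
    apply Measurable.ite (measurableSet_lt (by fun_prop) measurable_const) <;> fun_prop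
  -- density representation
  have hγd : γ = volume.withDensity (fun u => ((p u).toNNReal : ℝ≥0∞)) := by
    rw [hγdef, gaussianReal_of_var_ne_zero _ one_ne_zero]
    rfl
  have hpmeas' : Measurable fun u => (p u).toNNReal := hp_meas.real_toNNReal
  have hint_iff : ∀ f : ℝ → ℝ, Integrable f γ ↔ Integrable (fun u => p u * f u) volume := by
    intro f
    rw [hγd, integrable_withDensity_iff_integrable_smul hpmeas']
    constructor <;> intro h <;> apply h.congr <;> filter_upwards with u
    · simp [NNReal.smul_def, Real.coe_toNNReal _ (hp_nonneg u)]
    · simp [NNReal.smul_def, Real.coe_toNNReal _ (hp_nonneg u)]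
  have hint_eq : ∀ f : ℝ → ℝ, ∫ u, f u ∂γ = ∫ u, p u * f u := by
    intro f
    rw [hγd, integral_withDensity_eq_integral_smul hpmeas']
    congr 1
    ext u
    simp [NNReal.smul_def, Real.coe_toNNReal _ (hp_nonneg u)]
  -- integrability of p * |u|
  have hint_pabs : Integrable (fun u => p u * |u|) volume := by
    have h0 : Integrable (fun u : ℝ => c * |u * Real.exp (-(1/2) * u ^ 2)|) volume :=
      (integrable_mul_exp_neg_mul_sq (by norm_num : (0:ℝ) < 1/2)).abs.const_mul c
    apply h0.congr
    filter_upwards with u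
    rw [abs_mul, abs_of_pos (Real.exp_pos _), hp]
    ring
  -- |d u| ≤ |u|
  have hd_abs : ∀ u, |d u| ≤ |u| := by
    intro u
    rw [hddef]
    dsimp only
    split_ifs with h
    · rw [abs_mul, abs_of_pos (Real.exp_pos _)]
      nlinarith [abs_nonneg u, Real.exp_le_one_iff.2 (le_of_lt h)]
    · rw [abs_mul, abs_neg, abs_of_pos (Real.exp_pos _)]
      nlinarith [abs_nonneg u, Real.exp_le_one_iff.2 (neg_nonpos.2 (not_lt.1 h))]
  -- a.e. nonvanishing
  have hne : ∀ᵐ u ∂γ, σ * u + μ ≠ 0 := by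
    have habs : γ ≪ (volume : Measure ℝ) := gaussianReal_absolutelyContinuous 0 one_ne_zero
    have hz : γ {u : ℝ | σ * u + μ = 0} = 0 := by
      apply habs
      refine measure_mono_null (fun u hu => ?_) (measure_singleton (-μ / σ))
      simp only [mem_setOf_eq] at hu
      simp only [mem_singleton_iff]
      field_simp
      linarith
    rw [ae_iff]
    simpa using hz
  -- a.e. differentiability
  have h_diff : ∀ᵐ u ∂γ, HasDerivAt (fun s => Real.exp (-|s * u + μ|)) (d u) σ := by
    filter_upwards [hne] with u hu
    have hlin : HasDerivAt (fun s : ℝ => s * u + μ) u σ := by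
      simpa using (hasDerivAt_mul_const u).add_const μ
    rcases hu.lt_or_gt with hlt | hgt
    · have hmem : {s : ℝ | s * u + μ < 0} ∈ nhds σ :=
        (isOpen_lt (by fun_prop) continuous_const).mem_nhds hlt
      have base : HasDerivAt (fun s : ℝ => Real.exp (s * u + μ))
          (u * Real.exp (σ * u + μ)) σ := by
        simpa [mul_comm] using hlin.exp
      have hdu : d u = u * Real.exp (σ * u + μ) := by rw [hddef]; simp [hlt]
      rw [hdu]
      apply base.congr_of_eventuallyEq
      filter_upwards [hmem] with s hs
      rw [abs_of_neg hs, neg_neg]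
    · have hmem : {s : ℝ | 0 < s * u + μ} ∈ nhds σ :=
        (isOpen_lt continuous_const (by fun_prop)).mem_nhds hgt
      have base : HasDerivAt (fun s : ℝ => Real.exp (-(s * u + μ)))
          ((-u) * Real.exp (-(σ * u + μ))) σ := by
        simpa [mul_comm] using hlin.neg.exp
      have hdu : d u = (-u) * Real.exp (-(σ * u + μ)) := by
        rw [hddef]; simp [not_lt.2 hgt.le]
      rw [hdu]
      apply base.congr_of_eventuallyEq
      filter_upwards [hmem] with s hs
      rw [abs_of_pos hs]
  -- differentiation under the integral sign
  have key := hasDerivAt_integral_of_dominated_loc_of_lip (μ := γ)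
      (F := fun s u => Real.exp (-|s * u + μ|)) (F' := d) (bound := fun u => |u|)
      (x₀ := σ) (s := Metric.ball σ 1) (Metric.ball_mem_nhds σ one_pos)
      (Eventually.of_forall fun s => Continuous.aestronglyMeasurable (by fun_prop))
      (by
        apply Integrable.mono' (integrable_const (1:ℝ))
          (Continuous.aestronglyMeasurable (by fun_prop))
        filter_upwards with u
        rw [Real.norm_eq_abs, abs_of_pos (Real.exp_pos _)]
        exact Real.exp_le_one_iff.2 (neg_nonpos.2 (abs_nonneg _)))
      hd_meas.aestronglyMeasurable
      (by
        filter_upwards with u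
        apply LipschitzWith.lipschitzOnWith
        apply LipschitzWith.of_dist_le_mul
        intro s t
        simp only [Real.dist_eq, Real.coe_nnabs]
        calc |Real.exp (-|s * u + μ|) - Real.exp (-|t * u + μ|)|
            ≤ |(|s * u + μ|) - (|t * u + μ|)| := exp_neg_lip (abs_nonneg _) (abs_nonneg _)
          _ ≤ |(s * u + μ) - (t * u + μ)| := abs_abs_sub_abs_le_abs_sub _ _
          _ = |u| * |s - t| := by rw [← abs_mul]; ring_nf
          _ ≤ |(|u|)| * |s - t| := by rw [abs_abs])
      (by
        rw [hint_iff]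
        exact hint_pabs)
      h_diff
  obtain ⟨hd_int, hD⟩ := key
  have hq' : q = ∫ u, d u ∂γ := by
    have hgc : (fun s => gConv s μ) = fun s => ∫ u, Real.exp (-|s * u + μ|) ∂γ := by
      funext s; exact gConv_eq s μ
    rw [hgc] at hq
    exact hq.unique hD
  -- now the explicit bound
  set u₀ : ℝ := -μ / σ with hu₀def
  have hσu₀ : σ * u₀ + μ = 0 := by rw [hu₀def]; field_simp; ring
  set C : ℝ := c * Real.exp (μ + σ ^ 2 / 2) with hCdef
  set D : ℝ := c * Real.exp (-μ + σ ^ 2 / 2) with hDdef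
  -- pointwise identities
  have hexpL : ∀ u, p u * Real.exp (σ * u + μ) = C * Real.exp (-(1/2) * (u - σ) ^ 2) := by
    intro u
    rw [hp, hCdef, mul_assoc, mul_assoc, ← Real.exp_add, ← Real.exp_add]
    congr 1
    ring
  have hexpR : ∀ u, p u * Real.exp (-(σ * u + μ)) = D * Real.exp (-(1/2) * (u + σ) ^ 2) := by
    intro u
    rw [hp, hDdef, mul_assoc, mul_assoc, ← Real.exp_add, ← Real.exp_add]
    congr 1
    ring
  have hexpL0 : C * Real.exp (-(1/2) * (u₀ - σ) ^ 2) = c * Real.exp (-(1/2) * u₀ ^ 2) := by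
    rw [hCdef, mul_assoc, ← Real.exp_add]
    congr 1
    rw [hu₀def]
    field_simp
    ring
  have hexpR0 : D * Real.exp (-(1/2) * (u₀ + σ) ^ 2) = c * Real.exp (-(1/2) * u₀ ^ 2) := by
    rw [hDdef, mul_assoc, ← Real.exp_add]
    congr 1
    rw [hu₀def]
    field_simp
    ring
  -- integrability of pieces
  have hint_pd : Integrable (fun u => p u * d u) volume := by
    apply hint_pabs.mono' ((hp_meas.mul hd_meas).aestronglyMeasurable)
    filter_upwards with u
    rw [Real.norm_eq_abs, Pi.mul_apply, abs_mul, abs_of_nonneg (hp_nonneg u)]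
    exact mul_le_mul_of_nonneg_left (hd_abs u) (hp_nonneg u)
  have hintL : Integrable (fun u => C * ((u - σ) * Real.exp (-(1/2) * (u - σ) ^ 2))) volume :=
    ((integrable_mul_exp_neg_mul_sq (by norm_num : (0:ℝ) < 1/2)).comp_sub_right σ).const_mul C
  have hintR : Integrable (fun u => -D * ((u + σ) * Real.exp (-(1/2) * (u + σ) ^ 2))) volume := by
    have := ((integrable_mul_exp_neg_mul_sq (by norm_num : (0:ℝ) < 1/2)).comp_sub_right
      (-σ)).const_mul (-D)
    apply this.congr
    filter_upwards with u
    ring_nf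
  -- FTC on the left piece
  have hderivL : ∀ u : ℝ, HasDerivAt (fun u => -C * Real.exp (-(1/2) * (u - σ) ^ 2))
      (C * ((u - σ) * Real.exp (-(1/2) * (u - σ) ^ 2))) u := by
    intro u
    have h1 : HasDerivAt (fun u : ℝ => -(1/2) * (u - σ) ^ 2)
        (-(1/2) * (2 * (u - σ) ^ 1 * 1)) u :=
      (((hasDerivAt_id u).sub_const σ).pow 2).const_mul (-(1/2))
    have h2 := (h1.exp).const_mul (-C)
    refine h2.congr_deriv ?_
    ring
  have htendL : Tendsto (fun u : ℝ => -C * Real.exp (-(1/2) * (u - σ) ^ 2)) atBot (nhds 0) := by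
    have h1 : Tendsto (fun u : ℝ => u - σ) atBot atBot :=
      tendsto_atBot_add_const_right _ _ tendsto_id
    have h2 : Tendsto (fun v : ℝ => v ^ 2) atBot atTop := by
      apply tendsto_atTop_mono' atBot _ tendsto_neg_atBot_atTop
      filter_upwards [eventually_le_atBot (-1 : ℝ)] with v hv
      nlinarith
    have h3 : Tendsto (fun u : ℝ => -(1/2) * (u - σ) ^ 2) atBot atBot := by
      apply Tendsto.const_mul_atTop_of_neg (by norm_num : (-(1/2) : ℝ) < 0)
      exact h2.comp h1
    have h4 := Real.tendsto_exp_atBot.comp h3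
    have := h4.const_mul (-C)
    simpa using this
  have hIleft : ∫ u in Iic u₀, C * ((u - σ) * Real.exp (-(1/2) * (u - σ) ^ 2))
      = -(c * Real.exp (-(1/2) * u₀ ^ 2)) := by
    rw [integral_Iic_of_hasDerivAt_of_tendsto' (fun u _ => hderivL u)
      hintL.integrableOn htendL]
    rw [sub_zero, ← hexpL0]
    ring
  -- FTC on the right piece
  have hderivR : ∀ u : ℝ, HasDerivAt (fun u => D * Real.exp (-(1/2) * (u + σ) ^ 2))
      (-D * ((u + σ) * Real.exp (-(1/2) * (u + σ) ^ 2))) u := by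
    intro u
    have h1 : HasDerivAt (fun u : ℝ => -(1/2) * (u + σ) ^ 2)
        (-(1/2) * (2 * (u + σ) ^ 1 * 1)) u :=
      (((hasDerivAt_id u).add_const σ).pow 2).const_mul (-(1/2))
    have h2 := (h1.exp).const_mul D
    refine h2.congr_deriv ?_
    ring
  have htendR : Tendsto (fun u : ℝ => D * Real.exp (-(1/2) * (u + σ) ^ 2)) atTop (nhds 0) := by
    have h1 : Tendsto (fun u : ℝ => u + σ) atTop atTop :=
      tendsto_atTop_add_const_right _ _ tendsto_id
    have h2 : Tendsto (fun v : ℝ => v ^ 2) atTop atTop :=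
      tendsto_pow_atTop (by norm_num : (2:ℕ) ≠ 0)
    have h3 : Tendsto (fun u : ℝ => -(1/2) * (u + σ) ^ 2) atTop atBot := by
      apply Tendsto.const_mul_atTop_of_neg (by norm_num : (-(1/2) : ℝ) < 0)
      exact h2.comp h1
    have h4 := Real.tendsto_exp_atBot.comp h3
    have := h4.const_mul D
    simpa using this
  have hIright : ∫ u in Ioi u₀, -D * ((u + σ) * Real.exp (-(1/2) * (u + σ) ^ 2))
      = -(c * Real.exp (-(1/2) * u₀ ^ 2)) := by
    rw [integral_Ioi_of_hasDerivAt_of_tendsto' (fun u _ => hderivR u)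
      hintR.integrableOn htendR]
    rw [zero_sub, ← hexpR0]
  -- lower bounds on each piece
  have hboundL : -(c * Real.exp (-(1/2) * u₀ ^ 2)) ≤ ∫ u in Iio u₀, p u * d u := by
    rw [← hIleft, ← setIntegral_congr_set (Iio_ae_eq_Iic (a := u₀))]
    apply setIntegral_mono_on hintL.integrableOn hint_pd.integrableOn measurableSet_Iio
    intro u hu
    rw [mem_Iio] at hu
    have hneg : σ * u + μ < 0 := by nlinarith [hσu₀]
    have hdu : d u = u * Real.exp (σ * u + μ) := by rw [hddef]; simp [hneg]
    rw [hdu]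
    calc C * ((u - σ) * Real.exp (-(1/2) * (u - σ) ^ 2))
        = p u * ((u - σ) * Real.exp (σ * u + μ)) := by
          linear_combination (σ - u) * hexpL u
      _ ≤ p u * (u * Real.exp (σ * u + μ)) := by
          apply mul_le_mul_of_nonneg_left _ (hp_nonneg u)
          apply mul_le_mul_of_nonneg_right (by linarith) (le_of_lt (Real.exp_pos _))
  have hboundR : -(c * Real.exp (-(1/2) * u₀ ^ 2)) ≤ ∫ u in Ici u₀, p u * d u := by
    rw [← hIright, ← setIntegral_congr_set (Ioi_ae_eq_Ici (a := u₀))]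
    apply setIntegral_mono_on hintR.integrableOn hint_pd.integrableOn measurableSet_Ioi
    intro u hu
    rw [mem_Ioi] at hu
    have hpos : 0 < σ * u + μ := by nlinarith [hσu₀]
    have hdu : d u = (-u) * Real.exp (-(σ * u + μ)) := by
      rw [hddef]; simp [not_lt.2 hpos.le]
    rw [hdu]
    calc -D * ((u + σ) * Real.exp (-(1/2) * (u + σ) ^ 2))
        = p u * (-(u + σ) * Real.exp (-(σ * u + μ))) := by
          linear_combination (u + σ) * hexpR u
      _ ≤ p u * ((-u) * Real.exp (-(σ * u + μ))) := by
          apply mul_le_mul_of_nonneg_left _ (hp_nonneg u)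
          apply mul_le_mul_of_nonneg_right (by linarith) (le_of_lt (Real.exp_pos _))
  -- combine
  have hsplit : ∫ u, p u * d u = (∫ u in Iio u₀, p u * d u) + ∫ u in Ici u₀, p u * d u :=
    (intervalIntegral.integral_Iio_add_Ici hint_pd.integrableOn hint_pd.integrableOn).symm
  have hfinal : -(2 * c * Real.exp (-(1/2) * u₀ ^ 2)) ≤ q := by
    rw [hq', hint_eq, hsplit]
    have := add_le_add hboundL hboundR
    linarith
  -- arithmetic: -√(2/π) e^{-μ²/(2σ²)} = -(2c e^{-(1/2)u₀²})
  have h2c : Real.sqrt (2 / π) = 2 * c := by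
    rw [hcdef]
    rw [Real.sqrt_div' 2 Real.pi_pos.le, Real.sqrt_mul (by norm_num : (0:ℝ) ≤ 2)]
    have hπ : 0 < Real.sqrt π := Real.sqrt_pos.2 Real.pi_pos
    have h2 : Real.sqrt 2 * Real.sqrt 2 = 2 := Real.mul_self_sqrt (by norm_num)
    have h2' : 0 < Real.sqrt 2 := Real.sqrt_pos.2 (by norm_num)
    field_simp
    nlinarith
  have hexp_eq : Real.exp (-μ ^ 2 / (2 * σ ^ 2)) = Real.exp (-(1/2) * u₀ ^ 2) := by
    congr 1
    rw [hu₀def]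
    field_simp
  rw [h2c, hexp_eq]
  linarith [hfinal]
end

section
/- Let x₁ be a random vector in ℝ^{d₁} with E[‖x₁‖₂] finite, let ℓ(t) = exp(−|t|), and g_σ(μ) = E_{z∼N(μ,σ²)}[ℓ(z)] for σ ≤ 1. Then for any w₁ with ‖w₁‖₂ ≤ R, E_{x₁}[g_σ(w₁ᵀx₁)] ≥ 0.25·exp(−R·E[‖x₁‖₂]). -/
open MeasureTheory ProbabilityTheory Real
open scoped ENNReal NNReal

lemma gConv_as_integral (σ μ : ℝ) (hσ0 : 0 < σ) :
    gConv σ μ = ∫ z, gaussianPDFReal μ (σ ^ 2).toNNReal z * Real.exp (-|z|) := by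
  have hv : (σ ^ 2).toNNReal ≠ 0 := by
    simp [Real.toNNReal_eq_zero, not_le, pow_pos hσ0, hσ0.ne']
  rw [gConv, gaussianReal_of_var_ne_zero _ hv]
  have hpdf : gaussianPDF μ (σ ^ 2).toNNReal =
      fun z => ((gaussianPDFReal μ (σ ^ 2).toNNReal z).toNNReal : ℝ≥0∞) := by
    funext z; rw [gaussianPDF]; rfl
  rw [hpdf, integral_withDensity_eq_integral_smul
    ((measurable_gaussianPDFReal _ _).real_toNNReal) _]
  congr 1
  funext z
  rw [NNReal.smul_def, smul_eq_mul, Real.coe_toNNReal _ (gaussianPDFReal_nonneg _ _ _)]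

lemma pdf_mul_exp_eq (μ : ℝ) (v : ℝ≥0) (hv : 0 < (v : ℝ)) (z : ℝ) :
    gaussianPDFReal μ v z * Real.exp (-(z - μ) ^ 2 / 2)
      = (Real.sqrt (1 + v))⁻¹ * gaussianPDFReal μ (v / (1 + v)) z := by
  have h1v : (0:ℝ) < 1 + v := by linarith
  have hc : ((v / (1 + v) : ℝ≥0) : ℝ) = (v : ℝ) / (1 + v) := by
    push_cast; ring
  rw [gaussianPDFReal, gaussianPDFReal, hc]
  have hπ : (0:ℝ) < π := Real.pi_pos
  have hsq : Real.sqrt (2 * π * ((v:ℝ) / (1 + v)))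
      = Real.sqrt (2 * π * v) / Real.sqrt (1 + v) := by
    rw [← Real.sqrt_div' _ (by positivity)]
    congr 1; field_simp
  have h2 : -(z - μ) ^ 2 / (2 * (v:ℝ)) + -(z - μ) ^ 2 / 2
      = -(z - μ) ^ 2 / (2 * ((v:ℝ) / (1 + v))) := by
    field_simp; ring
  rw [hsq, ← h2, mul_assoc, ← Real.exp_add]
  have hs1 : (0:ℝ) < Real.sqrt (1 + v) := Real.sqrt_pos.mpr h1v
  have hs2 : (0:ℝ) < Real.sqrt (2 * π * v) := Real.sqrt_pos.mpr (by positivity)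
  field_simp

lemma gConv_ge (σ : ℝ) (hσ0 : 0 < σ) (hσ1 : σ ≤ 1) (μ : ℝ) :
    0.25 * Real.exp (-|μ|) ≤ gConv σ μ := by
  set v : ℝ≥0 := (σ ^ 2).toNNReal with hvdef
  have hvR : ((v : ℝ)) = σ ^ 2 := Real.coe_toNNReal _ (by positivity)
  have hv0 : (0:ℝ) < v := by rw [hvR]; positivity
  have hv1 : (v:ℝ) ≤ 1 := by rw [hvR]; nlinarith
  have hvne : v ≠ 0 := by
    intro h; rw [h] at hv0; simp at hv0
  have h1v : (0:ℝ) < 1 + v := by linarith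
  have hv'ne : v / (1 + v) ≠ 0 := by
    simp only [ne_eq, div_eq_zero_iff, not_or]
    constructor
    · exact hvne
    · intro h
      have := congrArg (fun x : ℝ≥0 => (x:ℝ)) h
      push_cast at this; linarith
  rw [gConv_as_integral σ μ hσ0, ← hvdef]
  -- pointwise lower bound
  have hpt : ∀ z, Real.exp (-|μ|) * Real.exp (-(1:ℝ)/2) * ((Real.sqrt (1 + v))⁻¹
        * gaussianPDFReal μ (v / (1 + v)) z)
      ≤ gaussianPDFReal μ v z * Real.exp (-|z|) := by
    intro z
    rw [← pdf_mul_exp_eq μ v hv0 z]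
    have habs : |z| ≤ |μ| + (1:ℝ)/2 + (z - μ) ^ 2 / 2 := by
      have h1 : |z| ≤ |μ| + |z - μ| := by
        calc |z| = |μ + (z - μ)| := by ring_nf
        _ ≤ |μ| + |z - μ| := abs_add_le _ _
      nlinarith [sq_nonneg (|z - μ| - 1), sq_abs (z - μ)]
    have := Real.exp_le_exp.mpr (neg_le_neg habs)
    calc Real.exp (-|μ|) * Real.exp (-(1:ℝ)/2) * (gaussianPDFReal μ v z
          * Real.exp (-(z - μ) ^ 2 / 2))
        = gaussianPDFReal μ v z
            * Real.exp (-(|μ| + (1:ℝ)/2 + (z - μ) ^ 2 / 2)) := by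
          rw [neg_add, neg_add, Real.exp_add, Real.exp_add]; ring_nf
      _ ≤ gaussianPDFReal μ v z * Real.exp (-|z|) :=
          mul_le_mul_of_nonneg_left (Real.exp_le_exp.mpr (neg_le_neg habs))
            (gaussianPDFReal_nonneg _ _ _)
  -- integrability
  have hint1 : Integrable (fun z => gaussianPDFReal μ v z * Real.exp (-|z|)) := by
    refine Integrable.mono' (integrable_gaussianPDFReal μ v)
      (((measurable_gaussianPDFReal μ v).mul
        ((Real.continuous_exp.comp continuous_abs.neg).measurable)).aestronglyMeasurable) ?_
    filter_upwards with z
    rw [Real.norm_eq_abs, abs_of_nonneg (mul_nonneg (gaussianPDFReal_nonneg _ _ _) (Real.exp_pos _).le)]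
    calc gaussianPDFReal μ v z * Real.exp (-|z|)
        ≤ gaussianPDFReal μ v z * 1 :=
          mul_le_mul_of_nonneg_left (Real.exp_le_one_iff.mpr (by simp [abs_nonneg]))
            (gaussianPDFReal_nonneg _ _ _)
      _ = gaussianPDFReal μ v z := mul_one _
  have hint2 : Integrable (fun z => Real.exp (-|μ|) * Real.exp (-(1:ℝ)/2)
      * ((Real.sqrt (1 + v))⁻¹ * gaussianPDFReal μ (v / (1 + v)) z)) := by
    exact ((integrable_gaussianPDFReal μ (v / (1 + v))).const_mul _).const_mul _
  have hmono := integral_mono hint2 hint1 hpt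
  have hI : ∫ z, Real.exp (-|μ|) * Real.exp (-(1:ℝ)/2) * ((Real.sqrt (1 + v))⁻¹
        * gaussianPDFReal μ (v / (1 + v)) z)
      = Real.exp (-|μ|) * Real.exp (-(1:ℝ)/2) * (Real.sqrt (1 + v))⁻¹ := by
    rw [integral_const_mul, integral_const_mul]
    rw [integral_gaussianPDFReal_eq_one μ hv'ne]
    ring
  rw [hI] at hmono
  refine le_trans ?_ hmono
  -- 0.25 * exp(-|μ|) ≤ exp(-|μ|) * exp(-1/2) * (sqrt (1+v))⁻¹
  have hs : Real.sqrt (1 + v) ≤ Real.sqrt 2 := Real.sqrt_le_sqrt (by linarith)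
  have hs0 : (0:ℝ) < Real.sqrt (1 + v) := Real.sqrt_pos.mpr h1v
  have h2 : (Real.sqrt 2)⁻¹ ≤ (Real.sqrt (1 + v))⁻¹ :=
    inv_anti₀ hs0 hs
  have hkey : (0.25:ℝ) ≤ Real.exp (-(1:ℝ)/2) * (Real.sqrt 2)⁻¹ := by
    have he : Real.exp 1 < 2.7182818286 := Real.exp_one_lt_d9
    have he0 : (0:ℝ) < Real.exp 1 := Real.exp_pos _
    have ha : (0:ℝ) < Real.exp (-(1:ℝ)/2) := Real.exp_pos _
    have haa : Real.exp (-(1:ℝ)/2) * Real.exp (-(1:ℝ)/2) * Real.exp 1 = 1 := by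
      rw [← Real.exp_add, ← Real.exp_add]; norm_num
    have hs2 : Real.sqrt 2 * Real.sqrt 2 = 2 := Real.mul_self_sqrt (by norm_num)
    have hs0' : (0:ℝ) < Real.sqrt 2 := Real.sqrt_pos.mpr (by norm_num)
    have h4 : Real.sqrt 2 / 4 ≤ Real.exp (-(1:ℝ)/2) := by
      nlinarith [mul_pos ha ha, mul_pos hs0' ha]
    calc (0.25:ℝ) = (Real.sqrt 2 / 4) * (Real.sqrt 2)⁻¹ := by
          field_simp
          nlinarith [hs2]
      _ ≤ Real.exp (-(1:ℝ)/2) * (Real.sqrt 2)⁻¹ :=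
          mul_le_mul_of_nonneg_right h4 (by positivity)
  calc (0.25:ℝ) * Real.exp (-|μ|)
      ≤ (Real.exp (-(1:ℝ)/2) * (Real.sqrt 2)⁻¹) * Real.exp (-|μ|) :=
        mul_le_mul_of_nonneg_right hkey (Real.exp_pos _).le
    _ ≤ (Real.exp (-(1:ℝ)/2) * (Real.sqrt (1 + v))⁻¹) * Real.exp (-|μ|) := by
        apply mul_le_mul_of_nonneg_right _ (Real.exp_pos _).le
        exact mul_le_mul_of_nonneg_left h2 (Real.exp_pos _).le
    _ = Real.exp (-|μ|) * Real.exp (-(1:ℝ)/2) * (Real.sqrt (1 + v))⁻¹ := by ring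

/-- Lower bound on the expected smoothed loss: for `0 < σ ≤ 1` and `‖w₁‖ ≤ R`,
`E_{x₁}[g_σ(w₁ᵀx₁)] ≥ 0.25·exp(−R·E[‖x₁‖])`. -/
theorem expected_loss_lower_bound
    {d : ℕ} {Ω : Type*} [MeasureSpace Ω] (P : Measure Ω) [IsProbabilityMeasure P]
    (x₁ : Ω → EuclideanSpace ℝ (Fin d)) (hmeas : Measurable x₁)
    (hnorm : Integrable (fun ω => ‖x₁ ω‖) P)
    (w₁ : EuclideanSpace ℝ (Fin d)) (R σ : ℝ)
    (hR : ‖w₁‖ ≤ R) (hσ0 : 0 < σ) (hσ1 : σ ≤ 1)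
    (hintg : Integrable (fun ω => gConv σ (inner ℝ w₁ (x₁ ω) : ℝ)) P) :
    0.25 * Real.exp (-R * ∫ ω, ‖x₁ ω‖ ∂P) ≤
      ∫ ω, gConv σ (inner ℝ w₁ (x₁ ω) : ℝ) ∂P := by
  have hR0 : (0:ℝ) ≤ R := le_trans (norm_nonneg _) hR
  have hmeasn : Measurable fun ω => ‖x₁ ω‖ := hmeas.norm
  have hmeasexp : Measurable fun ω => Real.exp (-R * ‖x₁ ω‖) :=
    Real.measurable_exp.comp (hmeasn.const_mul (-R))
  have hexple : ∀ ω, Real.exp (-R * ‖x₁ ω‖) ≤ 1 := fun ω =>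
    Real.exp_le_one_iff.mpr (by nlinarith [norm_nonneg (x₁ ω)])
  have hint_exp : Integrable (fun ω => Real.exp (-R * ‖x₁ ω‖)) P := by
    refine Integrable.mono' (integrable_const (1:ℝ)) hmeasexp.aestronglyMeasurable ?_
    filter_upwards with ω
    rw [Real.norm_eq_abs, abs_of_pos (Real.exp_pos _)]
    exact hexple ω
  have hpt : ∀ ω, 0.25 * Real.exp (-R * ‖x₁ ω‖) ≤ gConv σ (inner ℝ w₁ (x₁ ω) : ℝ) := by
    intro ω
    refine le_trans ?_ (gConv_ge σ hσ0 hσ1 _)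
    have h1 : |(inner ℝ w₁ (x₁ ω) : ℝ)| ≤ R * ‖x₁ ω‖ :=
      le_trans (abs_real_inner_le_norm _ _)
        (mul_le_mul_of_nonneg_right hR (norm_nonneg _))
    have h2 : Real.exp (-R * ‖x₁ ω‖) ≤ Real.exp (-|(inner ℝ w₁ (x₁ ω) : ℝ)|) := by
      apply Real.exp_le_exp.mpr; rw [neg_mul]; exact neg_le_neg h1
    nlinarith [Real.exp_pos (-R * ‖x₁ ω‖)]
  have hint_low : Integrable (fun ω => 0.25 * Real.exp (-R * ‖x₁ ω‖)) P :=
    hint_exp.const_mul _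
  have hmono := integral_mono hint_low hintg hpt
  refine le_trans ?_ hmono
  rw [integral_const_mul]
  have hjen : Real.exp (∫ ω, -R * ‖x₁ ω‖ ∂P) ≤ ∫ ω, Real.exp (-R * ‖x₁ ω‖) ∂P :=
    convexOn_exp.map_integral_le Real.continuous_exp.continuousOn isClosed_univ
      (ae_of_all _ fun ω => Set.mem_univ _) (hnorm.const_mul (-R)) hint_exp
  rw [integral_const_mul] at hjen
  exact mul_le_mul_of_nonneg_left hjen (by norm_num)
end

section
/- Let g' denote the derivative of g_σ(μ) = E_{z∼N(μ,σ²)}[exp(−|z|)] with respect to μ. Then g_σ'(μ)·μ < 0 for all μ ≠ 0; i.e., g_σ is strictly decreasing on (0,∞) and strictly increasing on (−∞,0). Consequently, for any random vector x₁ and weight w₁, ⟨E[g_σ'(w₁ᵀx₁)·x₁], w₁⟩ = E[g_σ'(w₁ᵀx₁)·(w₁ᵀx₁)] ≤ 0, with strict inequality whenever P(w₁ᵀx₁ ≠ 0) > 0. -/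
open MeasureTheory ProbabilityTheory Real Set
open scoped NNReal ENNReal

-- 1-Lipschitz of exp(-|t|)
lemma exp_neg_abs_lip : LipschitzWith 1 (fun t : ℝ => Real.exp (-|t|)) := by
  rw [lipschitzWith_iff_dist_le_mul]
  intro a b
  rw [Real.dist_eq, Real.dist_eq, NNReal.coe_one, one_mul]
  have key : ∀ u v : ℝ, 0 ≤ u → 0 ≤ v → u ≤ v →
      |Real.exp (-u) - Real.exp (-v)| ≤ v - u := by
    intro u v hu hv huv
    have h1 : Real.exp (-v) ≤ Real.exp (-u) := Real.exp_le_exp.2 (by linarith)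
    rw [abs_of_nonneg (by linarith)]
    have : Real.exp (-u) - Real.exp (-v) = Real.exp (-u) * (1 - Real.exp (-(v - u))) := by
      rw [mul_sub, mul_one, ← Real.exp_add]; ring_nf
    rw [this]
    have h2 : 1 - Real.exp (-(v - u)) ≤ v - u := by
      have := Real.add_one_le_exp (-(v - u)); linarith
    have h3 : Real.exp (-u) ≤ 1 := Real.exp_le_one_iff.2 (by linarith)
    have h4 : 0 ≤ 1 - Real.exp (-(v - u)) := by
      have : Real.exp (-(v-u)) ≤ 1 := Real.exp_le_one_iff.2 (by linarith); linarith
    calc Real.exp (-u) * (1 - Real.exp (-(v - u))) ≤ 1 * (1 - Real.exp (-(v-u))) :=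
          mul_le_mul_of_nonneg_right h3 h4
      _ ≤ v - u := by linarith
  have habs : abs (abs a - abs b) ≤ |a - b| := abs_abs_sub_abs_le_abs_sub a b
  rcases le_total (abs a) (abs b) with h | h
  · refine le_trans (key _ _ (abs_nonneg a) (abs_nonneg b) h) ?_
    calc abs b - abs a ≤ abs (abs b - abs a) := le_abs_self _
      _ = abs (abs a - abs b) := abs_sub_comm _ _
      _ ≤ |a - b| := habs
  · rw [abs_sub_comm]
    refine le_trans (key _ _ (abs_nonneg b) (abs_nonneg a) h) ?_
    calc abs a - abs b ≤ abs (abs a - abs b) := le_abs_self _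
      _ ≤ |a - b| := habs
    

noncomputable def phd (t : ℝ) : ℝ := if 0 < t then -Real.exp (-t) else Real.exp t

lemma phd_abs_le (t : ℝ) : |phd t| ≤ 1 := by
  unfold phd; split
  · rw [abs_neg, abs_of_nonneg (Real.exp_nonneg _)]
    exact Real.exp_le_one_iff.2 (by linarith)
  · rw [abs_of_nonneg (Real.exp_nonneg _)]
    exact Real.exp_le_one_iff.2 (by linarith)

lemma phd_meas : Measurable phd := by
  unfold phd
  exact Measurable.ite (measurableSet_lt measurable_const measurable_id)
    (measurable_id.neg.exp.neg) (measurable_id.exp)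

lemma phd_neg {t : ℝ} (ht : t ≠ 0) : phd (-t) = -phd t := by
  unfold phd
  rcases lt_or_gt_of_ne ht with h | h
  · rw [if_neg (not_lt.2 h.le), if_pos (by linarith), neg_neg]
  · rw [if_pos h, if_neg (by simp; linarith), neg_neg]


lemma vpos {σ : ℝ} (hσ : 0 < σ) : (σ ^ 2).toNNReal ≠ (0 : NNReal) := by
  simp only [ne_eq, Real.toNNReal_eq_zero, not_le]
  positivity

-- a.e. singleton avoidance
lemma gauss_ae_ne (μ c : ℝ) {v : ℝ≥0} (hv : v ≠ 0) :
    ∀ᵐ z ∂(gaussianReal μ v), z ≠ c := by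
  have h0 : gaussianReal μ v {c} = 0 :=
    gaussianReal_absolutelyContinuous μ hv (measure_singleton c)
  rw [ae_iff]
  convert h0 using 2
  simp [Set.mem_singleton_iff]

lemma hasDerivAt_exp_neg_abs {z μ : ℝ} (hc : z + μ ≠ 0) :
    HasDerivAt (fun m : ℝ => Real.exp (-|z + m|)) (phd (z + μ)) μ := by
  rcases lt_or_gt_of_ne hc with h | h
  · -- z + μ < 0 : locally exp(z + m)
    have hd : HasDerivAt (fun m : ℝ => Real.exp (z + m)) (Real.exp (z + μ)) μ := by
      simpa using ((hasDerivAt_id μ).const_add z).exp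
    have hphd : phd (z + μ) = Real.exp (z + μ) := by
      unfold phd; rw [if_neg (not_lt.2 h.le)]
    rw [hphd]
    refine hd.congr_of_eventuallyEq ?_
    have : ∀ᶠ m in nhds μ, z + m < 0 := by
      have : Continuous fun m : ℝ => z + m := by continuity
      exact this.continuousAt.eventually_lt continuousAt_const h
    filter_upwards [this] with m hm
    rw [abs_of_neg hm, neg_neg]
  · -- z + μ > 0 : locally exp(-(z + m))
    have hd : HasDerivAt (fun m : ℝ => Real.exp (-(z + m))) (-Real.exp (-(z + μ))) μ := by
      simpa using (((hasDerivAt_id μ).const_add z).neg).exp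
    have hphd : phd (z + μ) = -Real.exp (-(z + μ)) := by
      unfold phd; rw [if_pos h]
    rw [hphd]
    refine hd.congr_of_eventuallyEq ?_
    have : ∀ᶠ m in nhds μ, 0 < z + m := by
      have hcont : Continuous fun m : ℝ => z + m := by continuity
      exact continuousAt_const.eventually_lt hcont.continuousAt h
    filter_upwards [this] with m hm
    rw [abs_of_pos hm]

lemma gConv_shift (σ μ : ℝ) :
    gConv σ μ = ∫ z, Real.exp (-|z + μ|) ∂(gaussianReal 0 (σ^2).toNNReal) := by
  rw [gConv]
  have hmap := gaussianReal_map_add_const (μ := 0) (v := (σ^2).toNNReal) μ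
  rw [zero_add] at hmap
  rw [← hmap,
    integral_map (φ := fun x : ℝ => x + μ) (Measurable.aemeasurable (by measurability))
      (Continuous.aestronglyMeasurable (by continuity))]

lemma hasDerivAt_gConv {σ : ℝ} (hσ : 0 < σ) (μ : ℝ) :
    HasDerivAt (fun m => gConv σ m)
      (∫ t, phd t ∂(gaussianReal μ (σ^2).toNNReal)) μ := by
  set v := (σ^2).toNNReal with hv
  have hv0 : v ≠ 0 := vpos hσ
  have key := hasDerivAt_integral_of_dominated_loc_of_lip
    (μ := gaussianReal 0 v) (𝕜 := ℝ)
    (F := fun (m : ℝ) (z : ℝ) => Real.exp (-|z + m|))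
    (F' := fun z => phd (z + μ)) (x₀ := μ) (bound := fun _ => 1)
    (s := Metric.ball μ 1) (Metric.ball_mem_nhds μ one_pos)
    (Filter.Eventually.of_forall fun m =>
      (Continuous.aestronglyMeasurable (by continuity)))
    (by -- integrable F x₀
      refine Integrable.mono' (integrable_const 1)
        (Continuous.aestronglyMeasurable (by continuity)) ?_
      refine Filter.Eventually.of_forall fun z => ?_
      rw [Real.norm_eq_abs, abs_of_nonneg (Real.exp_nonneg _)]
      exact Real.exp_le_one_iff.2 (neg_nonpos.2 (abs_nonneg _)))
    ((phd_meas.comp (measurable_id.add_const μ)).aestronglyMeasurable)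
    (by -- Lipschitz
      refine Filter.Eventually.of_forall fun z => ?_
      have : LipschitzWith 1 (fun m : ℝ => Real.exp (-|z + m|)) := by
        have h2 : LipschitzWith 1 (fun m : ℝ => z + m) := by
          rw [lipschitzWith_iff_dist_le_mul]
          intro a b; simp [Real.dist_eq, NNReal.coe_one]
        have h3 := exp_neg_abs_lip.comp h2; rw [mul_one] at h3; exact h3
      have h1 : Real.nnabs (1 : ℝ) = 1 := by simp
      rw [h1]
      exact LipschitzWith.lipschitzOnWith (s := Metric.ball μ 1) this)
    (integrable_const 1)
    (by -- a.e. differentiable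
      filter_upwards [gauss_ae_ne 0 (-μ) hv0] with z hz
      exact hasDerivAt_exp_neg_abs (by intro h; exact hz (by linarith)))
  obtain ⟨-, hderiv⟩ := key
  have hfun : (fun x : ℝ => ∫ z, Real.exp (-|z + x|) ∂(gaussianReal 0 v))
      = fun m => gConv σ m := by
    funext x; rw [gConv_shift]
  rw [hfun] at hderiv
  have hval : (∫ z, phd (z + μ) ∂(gaussianReal 0 v))
      = ∫ t, phd t ∂(gaussianReal μ v) := by
    have hmap := gaussianReal_map_add_const (μ := 0) (v := v) μ
    rw [zero_add] at hmap
    rw [← hmap, integral_map (φ := fun x : ℝ => x + μ)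
      (Measurable.aemeasurable (by measurability))
      (phd_meas.aestronglyMeasurable)]
  rwa [hval] at hderiv

lemma pdf_comp_neg (μ : ℝ) (v : ℝ≥0) (x : ℝ) :
    gaussianPDFReal μ v (-x) = gaussianPDFReal (-μ) v x := by
  unfold gaussianPDFReal
  congr 1
  ring_nf

lemma pdf_lt_pdf {μ : ℝ} (hμ : 0 < μ) {v : ℝ≥0} (hv : v ≠ 0) {x : ℝ} (hx : 0 < x) :
    gaussianPDFReal μ v (-x) < gaussianPDFReal μ v x := by
  unfold gaussianPDFReal
  have hvpos : (0:ℝ) < (v:ℝ) := by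
    have : v ≠ 0 := hv
    positivity
  refine mul_lt_mul_of_pos_left ?_
    (inv_pos.2 (Real.sqrt_pos.2 (by positivity)))
  rw [Real.exp_lt_exp, div_lt_div_iff_of_pos_right (by positivity)]
  nlinarith

lemma integral_phd_neg {σ : ℝ} (hσ : 0 < σ) {μ : ℝ} (hμ : 0 < μ) :
    (∫ t, phd t ∂(gaussianReal μ (σ^2).toNNReal)) < 0 := by
  set v := (σ^2).toNNReal with hvdef
  have hv0 : v ≠ 0 := vpos hσ
  set f : ℝ → ℝ := gaussianPDFReal μ v with hf
  set q : ℝ → ℝ := fun x => f x * phd x with hq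
  have hfmeas : Measurable f := measurable_gaussianPDFReal μ v
  have hfint : Integrable f := integrable_gaussianPDFReal μ v
  have hqmeas : Measurable q := hfmeas.mul phd_meas
  have hqint : Integrable q := by
    refine Integrable.mono' hfint hqmeas.aestronglyMeasurable ?_
    refine Filter.Eventually.of_forall fun x => ?_
    rw [hq, Real.norm_eq_abs, abs_mul,
      abs_of_nonneg (gaussianPDFReal_nonneg μ v x)]
    calc f x * |phd x| ≤ f x * 1 :=
          mul_le_mul_of_nonneg_left (phd_abs_le x) (gaussianPDFReal_nonneg μ v x)
      _ = f x := mul_one _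
  -- rewrite the gaussian integral as a Lebesgue integral against the pdf
  have hrw : (∫ t, phd t ∂(gaussianReal μ v)) = ∫ x, q x := by
    rw [gaussianReal_of_var_ne_zero μ hv0]
    have hd : (gaussianPDF μ v) = fun x => ((f x).toNNReal : ℝ≥0∞) := by
      funext x; rw [gaussianPDF]; rfl
    rw [hd, integral_withDensity_eq_integral_smul
      (hfmeas.real_toNNReal) phd]
    congr 1
    funext x
    rw [NNReal.smul_def, smul_eq_mul, Real.coe_toNNReal _ (gaussianPDFReal_nonneg μ v x)]
  rw [hrw]
  -- integrability of q ∘ neg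
  have hqnegint : Integrable (fun x => q (-x)) := by
    refine Integrable.mono' (integrable_gaussianPDFReal (-μ) v)
      ((hqmeas.comp measurable_neg).aestronglyMeasurable) ?_
    refine Filter.Eventually.of_forall fun x => ?_
    rw [hq, Real.norm_eq_abs, abs_mul]
    have habs : |f (-x)| = gaussianPDFReal (-μ) v x := by
      rw [hf, abs_of_nonneg (gaussianPDFReal_nonneg μ v _), pdf_comp_neg]
    rw [habs]
    calc gaussianPDFReal (-μ) v x * |phd (-x)| ≤ gaussianPDFReal (-μ) v x * 1 :=
          mul_le_mul_of_nonneg_left (phd_abs_le _) (gaussianPDFReal_nonneg _ v x)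
      _ = _ := mul_one _
  -- split the integral
  have hsplit : (∫ x, q x) = (∫ x in Iic (0:ℝ), q x) + ∫ x in Ioi (0:ℝ), q x :=
    (intervalIntegral.integral_Iic_add_Ioi hqint.integrableOn hqint.integrableOn).symm
  have hneg : (∫ x in Iic (0:ℝ), q x) = ∫ x in Ioi (0:ℝ), q (-x) := by
    have := integral_comp_neg_Iic (0:ℝ) (fun x => q (-x))
    rw [neg_zero] at this
    simp only [neg_neg] at this
    exact this
  rw [hsplit, hneg, ← integral_add hqnegint.integrableOn hqint.integrableOn]
  -- strict negativity on Ioi 0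
  have hptwise : ∀ x ∈ Ioi (0:ℝ), q (-x) + q x < 0 := by
    intro x hx
    rw [mem_Ioi] at hx
    have h1 : phd (-x) = Real.exp (-x) := by
      unfold phd; rw [if_neg (by simp; linarith)]
    have h2 : phd x = -Real.exp (-x) := by
      unfold phd; rw [if_pos hx]
    rw [hq]
    simp only [h1, h2]
    have : f (-x) * Real.exp (-x) + f x * -Real.exp (-x)
        = (f (-x) - f x) * Real.exp (-x) := by ring
    rw [this]
    exact mul_neg_of_neg_of_pos (by linarith [pdf_lt_pdf hμ hv0 hx]) (Real.exp_pos _)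
  have hkey : 0 < ∫ x in Ioi (0:ℝ), -(q (-x) + q x) := by
    rw [setIntegral_pos_iff_support_of_nonneg_ae]
    · have hsub : Ioi (0:ℝ) ⊆
          Function.support (fun x => -(q (-x) + q x)) ∩ Ioi 0 := by
        intro x hx
        refine ⟨?_, hx⟩
        simp only [Function.mem_support]
        have := hptwise x hx
        intro h0
        rw [neg_eq_zero] at h0
        linarith [h0 ▸ this]
      calc (0:ℝ≥0∞) < volume (Ioi (0:ℝ)) := by rw [Real.volume_Ioi]; norm_num
        _ ≤ _ := measure_mono hsub
    · rw [Filter.EventuallyLE, ae_restrict_iff' measurableSet_Ioi]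
      refine Filter.Eventually.of_forall fun x hx => ?_
      simp only [Pi.zero_apply]
      linarith [hptwise x hx]
    · exact ((hqnegint.integrableOn.add hqint.integrableOn).neg)
  have : (∫ x in Ioi (0:ℝ), (q (-x) + q x)) = -∫ x in Ioi (0:ℝ), -(q (-x) + q x) := by
    rw [integral_neg, neg_neg]
  rw [this]
  linarith

lemma integral_phd_pos {σ : ℝ} (hσ : 0 < σ) {μ : ℝ} (hμ : μ < 0) :
    0 < ∫ t, phd t ∂(gaussianReal μ (σ^2).toNNReal) := by
  set v := (σ^2).toNNReal with hvdef
  have hv0 : v ≠ 0 := vpos hσ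
  have hmap : Measure.map (fun x : ℝ => -1 * x) (gaussianReal (-μ) v)
      = gaussianReal μ v := by
    rw [gaussianReal_map_const_mul (-1)]
    congr 1
    · ring
    · ext
      push_cast
      norm_num
  have h1 : (∫ t, phd t ∂(gaussianReal μ v))
      = ∫ x, phd (-1 * x) ∂(gaussianReal (-μ) v) := by
    rw [← hmap, integral_map (φ := fun x : ℝ => -1 * x)
      ((measurable_id.const_mul (-1)).aemeasurable) phd_meas.aestronglyMeasurable]
  have h2 : (∫ x, phd (-1 * x) ∂(gaussianReal (-μ) v))
      = ∫ x, -phd x ∂(gaussianReal (-μ) v) := by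
    refine integral_congr_ae ?_
    filter_upwards [gauss_ae_ne (-μ) 0 hv0] with x hx
    rw [neg_one_mul, phd_neg hx]
  rw [h1, h2, integral_neg]
  have := integral_phd_neg hσ (by linarith : (0:ℝ) < -μ)
  rw [← hvdef] at this
  linarith

/-- The signal direction is never shrunk: `g_σ'(μ)·μ < 0` for `μ ≠ 0`, and consequently
`E[g_σ'(w₁ᵀx₁)·(w₁ᵀx₁)] ≤ 0`, strictly whenever `P(w₁ᵀx₁ ≠ 0) > 0`. -/
theorem signal_direction_gradient
    {d : ℕ} {Ω : Type*} [MeasureSpace Ω] (P : Measure Ω) [IsProbabilityMeasure P]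
    (x₁ : Ω → EuclideanSpace ℝ (Fin d)) (hmeas : Measurable x₁)
    (w₁ : EuclideanSpace ℝ (Fin d)) (σ : ℝ) (hσ : 0 < σ)
    (hint : Integrable
      (fun ω => deriv (fun m => gConv σ m) (inner ℝ w₁ (x₁ ω) : ℝ) *
        (inner ℝ w₁ (x₁ ω) : ℝ)) P) :
    (∀ μ : ℝ, μ ≠ 0 → deriv (fun m => gConv σ m) μ * μ < 0) ∧
    (∫ ω, deriv (fun m => gConv σ m) (inner ℝ w₁ (x₁ ω) : ℝ) *
        (inner ℝ w₁ (x₁ ω) : ℝ) ∂P) ≤ 0 ∧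
    (0 < P {ω | (inner ℝ w₁ (x₁ ω) : ℝ) ≠ 0} →
      (∫ ω, deriv (fun m => gConv σ m) (inner ℝ w₁ (x₁ ω) : ℝ) *
        (inner ℝ w₁ (x₁ ω) : ℝ) ∂P) < 0) := by
  have hpart1 : ∀ μ : ℝ, μ ≠ 0 → deriv (fun m => gConv σ m) μ * μ < 0 := by
    intro μ hμ
    have hD : deriv (fun m => gConv σ m) μ
        = ∫ t, phd t ∂(gaussianReal μ (σ^2).toNNReal) :=
      (hasDerivAt_gConv hσ μ).deriv
    rcases lt_or_gt_of_ne hμ with h | h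
    · rw [hD]; exact mul_neg_of_pos_of_neg (integral_phd_pos hσ h) h
    · rw [hD]; exact mul_neg_of_neg_of_pos (integral_phd_neg hσ h) h
  have key : ∀ t : ℝ, deriv (fun m => gConv σ m) t * t ≤ 0 := by
    intro t
    by_cases h : t = 0
    · rw [h, mul_zero]
    · exact (hpart1 t h).le
  refine ⟨hpart1, ?_, ?_⟩
  · exact integral_nonpos fun ω => key (inner ℝ w₁ (x₁ ω) : ℝ)
  · intro hP
    have hle : ∀ ω, 0 ≤ -(deriv (fun m => gConv σ m) (inner ℝ w₁ (x₁ ω) : ℝ) *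
        (inner ℝ w₁ (x₁ ω) : ℝ)) := fun ω => by
      have := key (inner ℝ w₁ (x₁ ω) : ℝ); linarith
    have hpos : 0 < ∫ ω, -(deriv (fun m => gConv σ m) (inner ℝ w₁ (x₁ ω) : ℝ) *
        (inner ℝ w₁ (x₁ ω) : ℝ)) ∂P := by
      rw [integral_pos_iff_support_of_nonneg_ae
        (Filter.Eventually.of_forall hle) hint.neg]
      refine lt_of_lt_of_le hP (measure_mono ?_)
      intro ω hω
      simp only [Function.mem_support]
      have hlt := hpart1 _ hω
      intro h0
      rw [neg_eq_zero] at h0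
      linarith [h0 ▸ hlt]
    have heq : (∫ ω, deriv (fun m => gConv σ m) (inner ℝ w₁ (x₁ ω) : ℝ) *
          (inner ℝ w₁ (x₁ ω) : ℝ) ∂P)
        = -∫ ω, -(deriv (fun m => gConv σ m) (inner ℝ w₁ (x₁ ω) : ℝ) *
          (inner ℝ w₁ (x₁ ω) : ℝ)) ∂P := by
      rw [integral_neg, neg_neg]
    rw [heq]
    linarith
end
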